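/- Let ℰ⁽ⁿ⁾(Δ_κ; E) denote the maximal output ergotropy over n-qubit input states of energy at most E under Δ_κ^⊗n. Then for every n ≥ 1 and E ∈ [0,n]: E ≥ ℰ⁽ⁿ⁾(Δ_κ; E) ≥ E − 1. Consequently lim_{n→∞} ℰ⁽ⁿ⁾(Δ_κ; n𝔢)/n = 𝔢 for every 𝔢 ∈ [0,1]. -/

import Mathlib

open Matrix BigOperators

/-- Mean energy `Tr[ρH]` (real part). -/
noncomputable def energy {ι : Type*} [Fintype ι] (ρ H : Matrix ι ι ℂ) : ℝ :=
  (Matrix.trace (ρ * H)).re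

/-- Minimum of `Tr[UρU†H]` over all unitaries `U`. -/
noncomputable def minEnergy {ι : Type*} [Fintype ι] [DecidableEq ι]
    (ρ H : Matrix ι ι ℂ) : ℝ :=
  sInf {x | ∃ U ∈ Matrix.unitaryGroup ι ℂ, x = energy (U * ρ * star U) H}

/-- Ergotropy `ℰ(ρ;H) = Tr[ρH] − min_U Tr[UρU†H]`. -/
noncomputable def ergotropy {ι : Type*} [Fintype ι] [DecidableEq ι]
    (ρ H : Matrix ι ι ℂ) : ℝ :=
  energy ρ H - minEnergy ρ H
open scoped ComplexOrder

/-- The `n`-qubit Hamiltonian `H⁽ⁿ⁾ = Σⱼ |1⟩⟨1|ⱼ`, diagonal in the computational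
basis with entry the number of excited sites. -/
noncomputable def Hn (n : ℕ) :
    Matrix (Fin n → Fin 2) (Fin n → Fin 2) ℂ :=
  Matrix.diagonal fun f => ((∑ j, ((f j : ℕ) : ℝ) : ℝ) : ℂ)

/-- The `n`-fold tensor product `Δ_κ^⊗n` of the qubit dephasing channel: it
multiplies the matrix element between computational basis states `i, j` by
`√(1−κ)` raised to the number of sites where `i` and `j` differ. -/
noncomputable def dephN (n : ℕ) (κ : ℝ)
    (M : Matrix (Fin n → Fin 2) (Fin n → Fin 2) ℂ) :
    Matrix (Fin n → Fin 2) (Fin n → Fin 2) ℂ :=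
  Matrix.of fun i j =>
    ((Real.sqrt (1 - κ) ^ (Finset.univ.filter fun s => i s ≠ j s).card : ℝ) : ℂ) * M i j

/-- `ℰ⁽ⁿ⁾(Δ_κ;E)`: the maximal output ergotropy over `n`-qubit states of
energy at most `E` under `Δ_κ^⊗n`. -/
noncomputable def maxErgo (n : ℕ) (κ E : ℝ) : ℝ :=
  sSup {y : ℝ | ∃ σ : Matrix (Fin n → Fin 2) (Fin n → Fin 2) ℂ,
    σ.PosSemidef ∧ σ.trace = 1 ∧ energy σ (Hn n) ≤ E ∧
    y = ergotropy (dephN n κ σ) (Hn n)}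

lemma energy_diag {ι : Type*} [Fintype ι] [DecidableEq ι] (ρ : Matrix ι ι ℂ) (d : ι → ℝ) :
    energy ρ (Matrix.diagonal fun i => (d i : ℂ)) = ∑ i, (ρ i i).re * d i := by
  simp only [energy, Matrix.trace, Matrix.diag, Matrix.mul_diagonal, Complex.re_sum]
  refine Finset.sum_congr rfl fun i _ => ?_
  simp [Complex.mul_re]

lemma psd_diag_re_nonneg {ι : Type*} [Fintype ι] [DecidableEq ι] {ρ : Matrix ι ι ℂ}
    (hρ : ρ.PosSemidef) (i : ι) : 0 ≤ (ρ i i).re := by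
  have h := hρ.dotProduct_mulVec_nonneg (Pi.single i 1)
  have : (dotProduct (star (Pi.single i 1)) (ρ *ᵥ Pi.single i 1)) = ρ i i := by
    simp only [dotProduct, Matrix.mulVec, Pi.single_apply, star, Pi.star_apply,
      mul_ite, mul_one, mul_zero, ite_mul, one_mul, zero_mul, Finset.sum_ite_eq,
      Finset.mem_univ, if_true, apply_ite (starRingEnd ℂ)]
    rw [Finset.sum_eq_single i]
    · simp [Complex.ext_iff, Complex.mul_re, Complex.mul_im]
    · intro b _ hb
      simp [hb, Complex.ext_iff, Complex.mul_re, Complex.mul_im]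
    · simp
  rw [this] at h
  exact (Complex.le_def.mp h).1

lemma energy_Hn_nonneg {n : ℕ} {ρ : Matrix (Fin n → Fin 2) (Fin n → Fin 2) ℂ}
    (hρ : ρ.PosSemidef) : 0 ≤ energy ρ (Hn n) := by
  rw [Hn, energy_diag]
  refine Finset.sum_nonneg fun f _ => mul_nonneg (psd_diag_re_nonneg hρ f) ?_
  positivity

lemma minEnergy_Hn_nonneg {n : ℕ} {ρ : Matrix (Fin n → Fin 2) (Fin n → Fin 2) ℂ}
    (hρ : ρ.PosSemidef) : 0 ≤ minEnergy ρ (Hn n) := by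
  refine Real.sInf_nonneg fun x hx => ?_
  obtain ⟨U, -, rfl⟩ := hx
  exact energy_Hn_nonneg (by simpa [Matrix.star_eq_conjTranspose] using
    hρ.mul_mul_conjTranspose_same U)

/-- Gram vectors for the dephasing kernel. -/

noncomputable def wch (c s : ℝ) : Fin 2 → Fin 2 → ℂ :=
  fun a b => if a = 0 then (if b = 0 then 1 else 0) else (if b = 0 then (c:ℝ) else (s:ℝ))

lemma wch_sum (c s : ℝ) (h : c^2 + s^2 = 1) (a a' : Fin 2) :
    ∑ b : Fin 2, (starRingEnd ℂ) (wch c s a b) * wch c s a' b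
      = if a = a' then 1 else (c:ℂ) := by
  fin_cases a <;> fin_cases a' <;>
    simp [wch, Fin.sum_univ_two, ← Complex.ofReal_pow, ← Complex.ofReal_mul,
      ← Complex.ofReal_add] <;>
  all_goals nlinarith [h]

lemma gram_eq (n : ℕ) (c s : ℝ) (h : c^2 + s^2 = 1) (i j : Fin n → Fin 2) :
    ((c ^ (Finset.univ.filter fun t => i t ≠ j t).card : ℝ) : ℂ)
      = ∑ k : Fin n → Fin 2,
          (starRingEnd ℂ) (∏ t, wch c s (i t) (k t)) * ∏ t, wch c s (j t) (k t) := by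
  have h1 : ∀ k : Fin n → Fin 2,
      (starRingEnd ℂ) (∏ t, wch c s (i t) (k t)) * ∏ t, wch c s (j t) (k t)
        = ∏ t, (starRingEnd ℂ) (wch c s (i t) (k t)) * wch c s (j t) (k t) := by
    intro k; rw [map_prod, ← Finset.prod_mul_distrib]
  simp only [h1]
  have h2 := Finset.sum_prod_piFinset (Finset.univ : Finset (Fin 2))
    (fun t b => (starRingEnd ℂ) (wch c s (i t) b) * wch c s (j t) b)
  rw [← Fintype.piFinset_univ, h2]
  simp only [wch_sum c s h]
  rw [Finset.prod_ite, Finset.prod_const_one, one_mul, Finset.prod_const]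
  push_cast
  congr 1

lemma dephN_posSemidef {n : ℕ} {κ : ℝ} (hκ : κ ∈ Set.Icc (0:ℝ) 1)
    {σ : Matrix (Fin n → Fin 2) (Fin n → Fin 2) ℂ} (hσ : σ.PosSemidef) :
    (dephN n κ σ).PosSemidef := by
  obtain ⟨hκ0, hκ1⟩ := hκ
  set c : ℝ := Real.sqrt (1 - κ) with hc
  have hcs : c ^ 2 + (Real.sqrt (1 - c ^ 2)) ^ 2 = 1 := by
    have h1 : c ^ 2 = 1 - κ := Real.sq_sqrt (by linarith)
    rw [h1, Real.sq_sqrt (by linarith)]; ring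
  set s : ℝ := Real.sqrt (1 - c ^ 2)
  set B : (Fin n → Fin 2) → (Fin n → Fin 2) → ℂ :=
    fun k i => ∏ t, wch c s (i t) (k t) with hB
  rw [Matrix.posSemidef_iff_dotProduct_mulVec]
  constructor
  · -- Hermitian
    ext i j
    have hsym : (Finset.univ.filter fun t => j t ≠ i t)
        = (Finset.univ.filter fun t => i t ≠ j t) :=
      Finset.filter_congr fun t _ => by simp [ne_comm]
    have hherm : (starRingEnd ℂ) (σ j i) = σ i j := by
      have h2 := congrFun (congrFun hσ.1 i) j
      simpa [Matrix.conjTranspose_apply] using h2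
    simp only [Matrix.conjTranspose_apply, dephN, Matrix.of_apply, star_mul',
      RCLike.star_def, Complex.conj_ofReal, hsym, hherm]
  · intro x
    have e1 : dotProduct (star x) (dephN n κ σ *ᵥ x)
        = ∑ i, ∑ j, ∑ k, (starRingEnd ℂ) (B k i * x i) * (σ i j * (B k j * x j)) := by
      simp only [dotProduct, Matrix.mulVec, dephN, Matrix.of_apply, Pi.star_apply,
        RCLike.star_def, Finset.mul_sum]
      refine Finset.sum_congr rfl fun i _ => Finset.sum_congr rfl fun j _ => ?_
      rw [← hc, gram_eq n c s hcs i j, Finset.sum_mul, Finset.sum_mul, Finset.mul_sum]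
      refine Finset.sum_congr rfl fun k _ => ?_
      simp only [hB, _root_.map_mul]
      ring
    have e2 : (∑ i, ∑ j, ∑ k : Fin n → Fin 2,
          (starRingEnd ℂ) (B k i * x i) * (σ i j * (B k j * x j)))
        = ∑ i, ∑ k : Fin n → Fin 2, ∑ j,
          (starRingEnd ℂ) (B k i * x i) * (σ i j * (B k j * x j)) :=
      Finset.sum_congr rfl fun i _ => Finset.sum_comm
    rw [e1, e2, Finset.sum_comm]
    refine Finset.sum_nonneg fun k _ => ?_
    have e3 : (∑ i, ∑ j, (starRingEnd ℂ) (B k i * x i) * (σ i j * (B k j * x j)))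
        = dotProduct (star fun i => B k i * x i) (σ *ᵥ fun i => B k i * x i) := by
      simp only [dotProduct, Matrix.mulVec, Pi.star_apply, RCLike.star_def,
        Finset.mul_sum]
    rw [e3]
    exact hσ.dotProduct_mulVec_nonneg _

lemma dephN_diag_entry (n : ℕ) (κ : ℝ) (σ : Matrix (Fin n → Fin 2) (Fin n → Fin 2) ℂ)
    (i : Fin n → Fin 2) : dephN n κ σ i i = σ i i := by
  simp [dephN]

lemma energy_dephN (n : ℕ) (κ : ℝ) (σ : Matrix (Fin n → Fin 2) (Fin n → Fin 2) ℂ) :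
    energy (dephN n κ σ) (Hn n) = energy σ (Hn n) := by
  rw [Hn, energy_diag, energy_diag]
  exact Finset.sum_congr rfl fun i _ => by rw [dephN_diag_entry]

lemma dephN_diagonal (n : ℕ) (κ : ℝ) (v : (Fin n → Fin 2) → ℂ) :
    dephN n κ (Matrix.diagonal v) = Matrix.diagonal v := by
  ext i j
  by_cases h : i = j
  · subst h; simp [dephN]
  · simp [dephN, Matrix.diagonal_apply_ne _ h]

lemma ergo_out_le {n : ℕ} {κ E : ℝ} (hκ : κ ∈ Set.Icc (0:ℝ) 1)
    {σ : Matrix (Fin n → Fin 2) (Fin n → Fin 2) ℂ} (hσ : σ.PosSemidef)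
    (hE : energy σ (Hn n) ≤ E) : ergotropy (dephN n κ σ) (Hn n) ≤ E := by
  have h1 : 0 ≤ minEnergy (dephN n κ σ) (Hn n) :=
    minEnergy_Hn_nonneg (dephN_posSemidef hκ hσ)
  have h2 : energy (dephN n κ σ) (Hn n) ≤ E := by rwa [energy_dephN]
  unfold ergotropy; linarith

noncomputable def permU {ι : Type*} [Fintype ι] [DecidableEq ι] (e : Equiv.Perm ι) :
    Matrix ι ι ℂ :=
  Matrix.of fun i j => if i = e j then (1:ℂ) else 0

lemma permU_mem {ι : Type*} [Fintype ι] [DecidableEq ι] (e : Equiv.Perm ι) :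
    permU e ∈ Matrix.unitaryGroup ι ℂ := by
  rw [Matrix.mem_unitaryGroup_iff]
  ext i j
  rw [Matrix.star_eq_conjTranspose]
  simp only [Matrix.mul_apply, Matrix.conjTranspose_apply, permU, Matrix.of_apply,
    RCLike.star_def]
  have h := Equiv.sum_comp e (fun a => (if i = a then (1:ℂ) else 0) *
    (starRingEnd ℂ) (if j = a then (1:ℂ) else 0))
  rw [h]
  simp [apply_ite (starRingEnd ℂ), Finset.sum_ite_eq, Matrix.one_apply, eq_comm]

lemma permU_conj_diagonal {ι : Type*} [Fintype ι] [DecidableEq ι] (e : Equiv.Perm ι)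
    (v : ι → ℂ) :
    permU e * Matrix.diagonal v * star (permU e)
      = Matrix.diagonal (fun i => v (e.symm i)) := by
  ext i j
  rw [Matrix.star_eq_conjTranspose]
  simp only [Matrix.mul_apply, Matrix.conjTranspose_apply, permU, Matrix.of_apply,
    RCLike.star_def, Matrix.diagonal_apply, mul_ite, mul_zero, Finset.sum_ite_eq',
    Finset.mem_univ, if_true]
  have hcond : ∀ x, (j = e x) = (x = e.symm j) := fun x => by
    apply propext
    constructor
    · rintro rfl; simp
    · rintro rfl; simp
  simp only [hcond, Finset.sum_ite_eq', Finset.mem_univ, if_true, Equiv.apply_symm_apply]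
  by_cases hij : i = j <;> simp [hij]

noncomputable def fE (n m : ℕ) : Fin n → Fin 2 := fun j => if (j:ℕ) < m then 1 else 0

noncomputable def vR (n m : ℕ) : (Fin n → Fin 2) → ℝ := fun g => if g = fE n m then 1 else 0

noncomputable def sig0 (n m : ℕ) : Matrix (Fin n → Fin 2) (Fin n → Fin 2) ℂ :=
  Matrix.diagonal fun g => ((vR n m g : ℝ) : ℂ)

lemma sum_fE (n m : ℕ) (hm : m ≤ n) : (∑ j, ((fE n m j : ℕ) : ℝ)) = m := by
  have h1 : ∀ j : Fin n, ((fE n m j : ℕ) : ℝ) = if (j:ℕ) < m then 1 else 0 := by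
    intro j; simp [fE, apply_ite (fun a : Fin 2 => ((a : ℕ) : ℝ))]
  simp only [h1]
  rw [Fin.sum_univ_eq_sum_range (fun j => if j < m then (1:ℝ) else 0) n]
  rw [Finset.sum_ite, Finset.sum_const, Finset.sum_const_zero]
  have h2 : (Finset.range n).filter (fun j => j < m) = Finset.range m := by
    ext a; simp only [Finset.mem_filter, Finset.mem_range]; omega
  simp [h2]

lemma sig0_psd (n m : ℕ) : (sig0 n m).PosSemidef := by
  refine Matrix.PosSemidef.diagonal fun g => ?_
  simp only [vR]
  split <;> simp

lemma sig0_trace (n m : ℕ) : (sig0 n m).trace = 1 := by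
  simp [sig0, Matrix.trace_diagonal, vR, apply_ite (fun r : ℝ => (r : ℂ)),
    Finset.sum_ite_eq']

lemma sig0_energy (n m : ℕ) (hm : m ≤ n) : energy (sig0 n m) (Hn n) = m := by
  rw [Hn, energy_diag]
  have h1 : ∀ g, ((sig0 n m) g g).re = vR n m g := by
    intro g; simp [sig0]
  simp only [h1, vR, ite_mul, one_mul, zero_mul, Finset.sum_ite_eq', Finset.mem_univ,
    if_true]
  exact sum_fE n m hm

lemma sig0_minEnergy (n m : ℕ) : minEnergy (sig0 n m) (Hn n) = 0 := by
  have hbdd : ∀ x ∈ {x | ∃ U ∈ Matrix.unitaryGroup (Fin n → Fin 2) ℂ,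
      x = energy (U * sig0 n m * star U) (Hn n)}, 0 ≤ x := by
    rintro x ⟨U, -, rfl⟩
    exact energy_Hn_nonneg (by
      simpa [Matrix.star_eq_conjTranspose] using
        (sig0_psd n m).mul_mul_conjTranspose_same U)
  refine le_antisymm ?_ (Real.sInf_nonneg hbdd)
  set e : Equiv.Perm (Fin n → Fin 2) := Equiv.swap (fE n m) (fun _ => 0) with he
  have hmem : (0:ℝ) ∈ {x | ∃ U ∈ Matrix.unitaryGroup (Fin n → Fin 2) ℂ,
      x = energy (U * sig0 n m * star U) (Hn n)} := by
    refine ⟨permU e, permU_mem e, ?_⟩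
    rw [sig0, permU_conj_diagonal]
    have h2 : energy (Matrix.diagonal fun i => ((vR n m (e.symm i) : ℝ) : ℂ)) (Hn n)
        = ∑ g, vR n m (e.symm g) * ∑ j, ((g j : ℕ) : ℝ) := by
      rw [Hn, energy_diag]
      refine Finset.sum_congr rfl fun g _ => ?_
      congr 1
      simp
    rw [h2]
    symm
    refine Finset.sum_eq_zero fun g _ => ?_
    by_cases hg : e.symm g = fE n m
    · have hgf : g = fun _ => (0 : Fin 2) := by
        have : g = e (fE n m) := (Equiv.symm_apply_eq e).mp hg
        rw [this, he, Equiv.swap_apply_left]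
      rw [hgf]
      simp
    · simp [vR, hg]
  exact csInf_le ⟨0, hbdd⟩ hmem

lemma sig0_ergo (n m : ℕ) (hm : m ≤ n) (κ : ℝ) :
    ergotropy (dephN n κ (sig0 n m)) (Hn n) = m := by
  rw [sig0, dephN_diagonal, ← sig0, ergotropy, sig0_minEnergy, sig0_energy n m hm]
  ring

/-- For every `n ≥ 1` and `E ∈ [0,n]`, `E ≥ ℰ⁽ⁿ⁾(Δ_κ;E) ≥ E − 1`; consequently
`ℰ⁽ⁿ⁾(Δ_κ;n𝔢)/n → 𝔢` as `n → ∞` for every `𝔢 ∈ [0,1]`. -/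
theorem dephasing_maxErgo_bounds_and_capacitance (κ : ℝ) (hκ : κ ∈ Set.Icc (0:ℝ) 1) :
    (∀ n : ℕ, 1 ≤ n → ∀ E : ℝ, 0 ≤ E → E ≤ n →
      maxErgo n κ E ≤ E ∧ E - 1 ≤ maxErgo n κ E) ∧
    (∀ e : ℝ, e ∈ Set.Icc (0:ℝ) 1 →
      Filter.Tendsto (fun n : ℕ => maxErgo n κ (n * e) / n)
        Filter.atTop (nhds e)) := by
  have main : ∀ n : ℕ, 1 ≤ n → ∀ E : ℝ, 0 ≤ E → E ≤ n →
      maxErgo n κ E ≤ E ∧ E - 1 ≤ maxErgo n κ E := by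
    intro n hn E hE0 hEn
    have hub : ∀ y ∈ {y : ℝ | ∃ σ : Matrix (Fin n → Fin 2) (Fin n → Fin 2) ℂ,
        σ.PosSemidef ∧ σ.trace = 1 ∧ energy σ (Hn n) ≤ E ∧
        y = ergotropy (dephN n κ σ) (Hn n)}, y ≤ E := by
      rintro y ⟨σ, h1, h2, h3, rfl⟩
      exact ergo_out_le hκ h1 h3
    constructor
    · exact Real.sSup_le hub hE0
    · set m := ⌊E⌋₊ with hmdef
      have hm : m ≤ n := by
        have h := Nat.floor_le_floor hEn
        simpa using h
      have hmem : ((m:ℝ)) ∈ {y : ℝ | ∃ σ : Matrix (Fin n → Fin 2) (Fin n → Fin 2) ℂ,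
          σ.PosSemidef ∧ σ.trace = 1 ∧ energy σ (Hn n) ≤ E ∧
          y = ergotropy (dephN n κ σ) (Hn n)} := by
        refine ⟨sig0 n m, sig0_psd n m, sig0_trace n m, ?_, (sig0_ergo n m hm κ).symm⟩
        rw [sig0_energy n m hm]
        exact Nat.floor_le hE0
      have hle : (m:ℝ) ≤ maxErgo n κ E := le_csSup ⟨E, hub⟩ hmem
      have h4 : E < (m:ℝ) + 1 := Nat.lt_floor_add_one E
      linarith
  refine ⟨main, ?_⟩
  rintro e ⟨he0, he1⟩
  have key : ∀ n : ℕ, 1 ≤ n →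
      e - 1/(n:ℝ) ≤ maxErgo n κ ((n:ℝ)*e) / n ∧ maxErgo n κ ((n:ℝ)*e) / n ≤ e := by
    intro n hn
    have hn0 : (0:ℝ) < n := by exact_mod_cast hn
    have h1 : 0 ≤ (n:ℝ)*e := by positivity
    have h2 : (n:ℝ)*e ≤ n := by nlinarith
    obtain ⟨hu, hl⟩ := main n hn ((n:ℝ)*e) h1 h2
    constructor
    · rw [le_div_iff₀ hn0]
      have : (e - 1/(n:ℝ))*n = (n:ℝ)*e - 1 := by field_simp
      linarith
    · rw [div_le_iff₀ hn0]
      linarith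
  refine tendsto_of_tendsto_of_tendsto_of_le_of_le'
    (g := fun n : ℕ => e - 1/(n:ℝ)) (h := fun _ : ℕ => e)
    ?_ tendsto_const_nhds ?_ ?_
  · simpa using (tendsto_const_nhds (x := e)).sub tendsto_one_div_atTop_nhds_zero_nat
  · exact Filter.eventually_atTop.2 ⟨1, fun n hn => (key n hn).1⟩
  · exact Filter.eventually_atTop.2 ⟨1, fun n hn => (key n hn).2⟩
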